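/- Let k ≤ n and μ, μ' ∈ ℂ˟. If z ∈ Cl_N(q,c) is nonzero and satisfies z γ_k = μ γ_k z and z γ_{k'} = μ' γ_{k'} z, then z is homogeneous of degree 0 with respect to the grading ∂_k (i.e., in each monomial of z, γ_k and γ_{k'} occur equally often). -/

import Mathlib

noncomputable section

namespace FRT

/-- The "dual" index `i' = N+1-i` (0-indexed: `N-1-i`). -/
def dual {N : ℕ} (i : Fin N) : Fin N := ⟨N - 1 - i.val, by have := i.2; omega⟩

/-- Generators of the free algebra. -/
def gen {N : ℕ} (i : Fin N) : FreeAlgebra ℂ (Fin N) := FreeAlgebra.ι ℂ i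

/-- The sum `∑_{k<i} q^{2k-2i+2} γ_k γ_{k'}` appearing in the defining relations. -/
def pairSum (N : ℕ) (q : ℂ) (i : Fin N) : FreeAlgebra ℂ (Fin N) :=
  ∑ k ∈ Finset.Iio i, (q ^ (2 * (k.val : ℤ) - 2 * (i.val : ℤ) + 2)) • (gen k * gen (dual k))

/-- The defining relations of the FRT–Clifford algebra `Cl_N(q,c)`. -/
inductive Rel (N : ℕ) (q c : ℂ) : FreeAlgebra ℂ (Fin N) → FreeAlgebra ℂ (Fin N) → Prop
  | sq (i : Fin N) (h : 2 * i.val + 1 ≠ N) : Rel N q c (gen i * gen i) 0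
  | swap (i j : Fin N) (hlt : i < j) (h : i.val + j.val + 1 ≠ N) :
      Rel N q c (gen j * gen i) ((-(q ^ 2)) • (gen i * gen j))
  | pair (i : Fin N) (h : 2 * i.val + 1 < N) :
      Rel N q c (gen (dual i) * gen i)
        (-(gen i * gen (dual i)) + (q ^ 2 - q⁻¹ ^ 2) • pairSum N q i +
          algebraMap ℂ _ (c ^ 2 * q ^ ((N : ℤ) - 2 * (i.val : ℤ) - 1) * (q + q⁻¹)))
  | middle (i : Fin N) (h : 2 * i.val + 1 = N) :
      Rel N q c (gen i * gen i) ((q - q⁻¹) • pairSum N q i + algebraMap ℂ _ (c ^ 2))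

/-- The FRT–Clifford algebra `Cl_N(q,c)`. -/
abbrev Cl (N : ℕ) (q c : ℂ) := RingQuot (Rel N q c)

/-- The generators `γ_i` of `Cl_N(q,c)`. -/
def γ (N : ℕ) (q c : ℂ) (i : Fin N) : Cl N q c :=
  RingQuot.mkAlgHom ℂ (Rel N q c) (gen i)

/-- Ordered product `γ_1 γ_2 ⋯ γ_m` of the first `m` generators. -/
def prodFirst (N : ℕ) (q c : ℂ) (m : ℕ) : Cl N q c :=
  (((List.finRange N).take m).map (γ N q c)).prod

/-- Ordered product `γ_{m+1} γ_{m+2} ⋯ γ_N` (0-indexed: indices `m,…,N-1`). -/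
def prodFrom (N : ℕ) (q c : ℂ) (m : ℕ) : Cl N q c :=
  (((List.finRange N).drop m).map (γ N q c)).prod

/-- The ordered monomial `γ_1^{i_1} ⋯ γ_N^{i_N}` for `i ∈ {0,1}^N`. -/
def monoB (N : ℕ) (q c : ℂ) (f : Fin N → Bool) : Cl N q c :=
  ((List.finRange N).map (fun i => if f i then γ N q c i else 1)).prod

/-- The ordered monomial `γ_1^{i_1} ⋯ γ_n^{i_n}` for `i ∈ {0,1}^n`, `n ≤ N`. -/
def monoLow (N : ℕ) (q c : ℂ) {n : ℕ} (h : n ≤ N) (f : Fin n → Bool) : Cl N q c :=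
  ((List.finRange n).map (fun j => if f j then γ N q c (Fin.castLE h j) else 1)).prod

/-- `z` is homogeneous of `∂_i`-degree `0`: it is fixed by every algebra endomorphism
rescaling `γ_i` by `t` and `γ_{i'}` by `t⁻¹`. -/
def DegZeroAt (N : ℕ) (q c : ℂ) (i : ℕ) (z : Cl N q c) : Prop :=
  ∀ t : ℂ, t ≠ 0 → ∀ f : Cl N q c →ₐ[ℂ] Cl N q c,
    (∀ j : Fin N, f (γ N q c j) =
      (if j.val = i then t else if j.val + i + 1 = N then t⁻¹ else 1) • γ N q c j) →
    f z = z

section Aux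

variable {N : ℕ} {q c : ℂ}

lemma dual_val (i : Fin N) : (dual i).val = N - 1 - i.val := rfl

lemma dual_dual (i : Fin N) : dual (dual i) = i := by
  have := i.2; ext; simp only [dual]; omega

lemma dual_inj {i j : Fin N} (h : dual i = dual j) : i = j := by
  have := congrArg dual h; rwa [dual_dual, dual_dual] at this

/-- image of `pairSum` in `Cl`. -/
def PS (N : ℕ) (q c : ℂ) (i : Fin N) : Cl N q c :=
  ∑ l ∈ Finset.Iio i,
    (q ^ (2 * (l.val : ℤ) - 2 * (i.val : ℤ) + 2)) • (γ N q c l * γ N q c (dual l))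

lemma map_pairSum (f : FreeAlgebra ℂ (Fin N) →ₐ[ℂ] Cl N q c)
    (hf : ∀ l : Fin N, f (gen l * gen (dual l)) = γ N q c l * γ N q c (dual l)) (i : Fin N) :
    f (pairSum N q i) = PS N q c i := by
  unfold pairSum PS
  rw [map_sum]
  exact Finset.sum_congr rfl fun l _ => by rw [map_smul, hf l]

lemma pi_pair (l : Fin N) :
    (RingQuot.mkAlgHom ℂ (Rel N q c)) (gen l * gen (dual l)) = γ N q c l * γ N q c (dual l) := by
  rw [map_mul]; rfl

lemma R_sq (i : Fin N) (h : 2 * i.val + 1 ≠ N) : γ N q c i * γ N q c i = 0 := by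
  have h0 := RingQuot.mkAlgHom_rel ℂ (Rel.sq (q := q) (c := c) i h)
  rw [map_mul, map_zero] at h0
  exact h0

lemma R_swap {i j : Fin N} (hlt : i < j) (h : i.val + j.val + 1 ≠ N) :
    γ N q c j * γ N q c i = (-(q ^ 2)) • (γ N q c i * γ N q c j) := by
  have h0 := RingQuot.mkAlgHom_rel ℂ (Rel.swap (q := q) (c := c) i j hlt h)
  rw [map_mul, map_smul, map_mul] at h0
  exact h0

lemma R_swap' (hq : q ≠ 0) {i j : Fin N} (hlt : i < j) (h : i.val + j.val + 1 ≠ N) :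
    γ N q c i * γ N q c j = (-(q ^ 2))⁻¹ • (γ N q c j * γ N q c i) := by
  rw [R_swap hlt h, smul_smul, inv_mul_cancel₀ (neg_ne_zero.mpr (pow_ne_zero 2 hq)), one_smul]

lemma comm_scalar (hq : q ≠ 0) {i j : Fin N} (hne : i ≠ j) (hd : i.val + j.val + 1 ≠ N) :
    ∃ u : ℂ, γ N q c i * γ N q c j = u • (γ N q c j * γ N q c i) := by
  rcases lt_or_gt_of_ne hne with hlt | hlt
  · exact ⟨(-(q ^ 2))⁻¹, R_swap' hq hlt hd⟩
  · exact ⟨-(q ^ 2), R_swap hlt (by omega)⟩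

lemma R_pair (i : Fin N) (h : 2 * i.val + 1 < N) :
    γ N q c (dual i) * γ N q c i =
      -(γ N q c i * γ N q c (dual i)) + (q ^ 2 - q⁻¹ ^ 2) • PS N q c i +
        (c ^ 2 * q ^ ((N : ℤ) - 2 * (i.val : ℤ) - 1) * (q + q⁻¹)) • (1 : Cl N q c) := by
  have h0 := RingQuot.mkAlgHom_rel ℂ (Rel.pair (q := q) (c := c) i h)
  rw [map_mul, map_add, map_add, map_neg, map_mul, map_smul,
    map_pairSum _ (fun l => pi_pair l), AlgHom.commutes, Algebra.algebraMap_eq_smul_one] at h0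
  exact h0

lemma R_middle (i : Fin N) (h : 2 * i.val + 1 = N) :
    γ N q c i * γ N q c i = (q - q⁻¹) • PS N q c i + (c ^ 2) • (1 : Cl N q c) := by
  have h0 := RingQuot.mkAlgHom_rel ℂ (Rel.middle (q := q) (c := c) i h)
  rw [map_mul, map_add, map_smul, map_pairSum _ (fun l => pi_pair l), AlgHom.commutes,
    Algebra.algebraMap_eq_smul_one] at h0
  exact h0

end Aux

section Aux2

variable {N : ℕ} {q c : ℂ}

/-- `e_l = γ_l γ_{l'}`. -/
def Ee (N : ℕ) (q c : ℂ) (l : Fin N) : Cl N q c := γ N q c l * γ N q c (dual l)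

/-- `D_l = (q²-q⁻²) P_l + c² q^{N-2l-1}(q+q⁻¹)`. -/
def Dd (N : ℕ) (q c : ℂ) (l : Fin N) : Cl N q c :=
  (q ^ 2 - q⁻¹ ^ 2) • PS N q c l +
    (c ^ 2 * q ^ ((N : ℤ) - 2 * (l.val : ℤ) - 1) * (q + q⁻¹)) • (1 : Cl N q c)

lemma R_pair' (i : Fin N) (h : 2 * i.val + 1 < N) :
    γ N q c (dual i) * γ N q c i = Dd N q c i - Ee N q c i := by
  rw [R_pair i h]; unfold Dd Ee; abel

lemma comm_γ_E (hq : q ≠ 0) {j l : Fin N} (hlj : l.val < j.val) (hjl : j.val + l.val + 1 < N) :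
    γ N q c j * Ee N q c l = Ee N q c l * γ N q c j := by
  have hl2 := l.2
  have h1 : γ N q c j * γ N q c l = (-(q ^ 2)) • (γ N q c l * γ N q c j) :=
    R_swap (Fin.lt_def.mpr hlj) (by omega)
  have h2 : γ N q c j * γ N q c (dual l) = (-(q ^ 2))⁻¹ • (γ N q c (dual l) * γ N q c j) :=
    R_swap' hq (Fin.lt_def.mpr (by rw [dual_val]; omega)) (by rw [dual_val]; omega)
  have hne : (-(q ^ 2)) ≠ 0 := neg_ne_zero.mpr (pow_ne_zero 2 hq)
  unfold Ee
  calc γ N q c j * (γ N q c l * γ N q c (dual l))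
      = (γ N q c j * γ N q c l) * γ N q c (dual l) := by rw [mul_assoc]
    _ = (-(q ^ 2)) • (γ N q c l * (γ N q c j * γ N q c (dual l))) := by
        rw [h1, smul_mul_assoc, mul_assoc]
    _ = (-(q ^ 2)) • (γ N q c l * ((-(q ^ 2))⁻¹ • (γ N q c (dual l) * γ N q c j))) := by rw [h2]
    _ = ((-(q ^ 2)) * (-(q ^ 2))⁻¹) • (γ N q c l * (γ N q c (dual l) * γ N q c j)) := by
        rw [mul_smul_comm, smul_smul]
    _ = γ N q c l * γ N q c (dual l) * γ N q c j := by
        rw [mul_inv_cancel₀ hne, one_smul, mul_assoc]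

lemma comm_E_E (hq : q ≠ 0) {l m : Fin N} (hlm : l.val < m.val) (hm : 2 * m.val + 1 < N) :
    Ee N q c m * Ee N q c l = Ee N q c l * Ee N q c m := by
  have hm2 := m.2
  have h1 : γ N q c m * Ee N q c l = Ee N q c l * γ N q c m := comm_γ_E hq hlm (by omega)
  have h2 : γ N q c (dual m) * Ee N q c l = Ee N q c l * γ N q c (dual m) :=
    comm_γ_E hq (by rw [dual_val]; omega) (by rw [dual_val]; omega)
  calc Ee N q c m * Ee N q c l
      = γ N q c m * (γ N q c (dual m) * Ee N q c l) := by simp only [Ee, mul_assoc]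
    _ = γ N q c m * (Ee N q c l * γ N q c (dual m)) := by rw [h2]
    _ = (γ N q c m * Ee N q c l) * γ N q c (dual m) := by rw [mul_assoc]
    _ = (Ee N q c l * γ N q c m) * γ N q c (dual m) := by rw [h1]
    _ = Ee N q c l * Ee N q c m := by simp only [Ee, mul_assoc]

lemma comm_γ_PS (hq : q ≠ 0) {j i : Fin N}
    (hji : ∀ l : Fin N, l.val < i.val → l.val < j.val ∧ j.val + l.val + 1 < N) :
    γ N q c j * PS N q c i = PS N q c i * γ N q c j := by
  unfold PS
  rw [Finset.mul_sum, Finset.sum_mul]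
  refine Finset.sum_congr rfl fun l hl => ?_
  have hl' : l.val < i.val := Fin.lt_def.mp (Finset.mem_Iio.mp hl)
  rw [mul_smul_comm, smul_mul_assoc]
  exact congrArg _ (comm_γ_E hq (hji l hl').1 (hji l hl').2)

lemma comm_γ_Dd (hq : q ≠ 0) {j i : Fin N}
    (hji : ∀ l : Fin N, l.val < i.val → l.val < j.val ∧ j.val + l.val + 1 < N) :
    γ N q c j * Dd N q c i = Dd N q c i * γ N q c j := by
  unfold Dd
  rw [mul_add, add_mul, mul_smul_comm, smul_mul_assoc, comm_γ_PS hq hji,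
    mul_smul_comm, smul_mul_assoc, mul_one, one_mul]

lemma comm_E_PS (hq : q ≠ 0) {i m : Fin N} (him : i.val ≤ m.val) (hm : 2 * m.val + 1 < N) :
    Ee N q c m * PS N q c i = PS N q c i * Ee N q c m := by
  unfold PS
  rw [Finset.mul_sum, Finset.sum_mul]
  refine Finset.sum_congr rfl fun l hl => ?_
  have hl' : l.val < i.val := Fin.lt_def.mp (Finset.mem_Iio.mp hl)
  rw [mul_smul_comm, smul_mul_assoc]
  exact congrArg _ (comm_E_E hq (by omega) hm)

lemma comm_E_Dd (hq : q ≠ 0) {i m : Fin N} (him : i.val ≤ m.val) (hm : 2 * m.val + 1 < N) :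
    Ee N q c m * Dd N q c i = Dd N q c i * Ee N q c m := by
  unfold Dd
  rw [mul_add, add_mul, mul_smul_comm, smul_mul_assoc, comm_E_PS hq him hm,
    mul_smul_comm, smul_mul_assoc, mul_one, one_mul]

lemma E_sq (hq : q ≠ 0) (l : Fin N) (h : 2 * l.val + 1 < N) :
    Ee N q c l * Ee N q c l = Dd N q c l * Ee N q c l := by
  have hl2 := l.2
  set a := γ N q c l
  set b := γ N q c (dual l)
  set D := Dd N q c l
  have hba : b * a = D - a * b := R_pair' l h
  have haa : a * a = 0 := R_sq l (by omega)
  have hbb : b * b = 0 := R_sq (dual l) (by rw [dual_val]; omega)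
  have haD : a * D = D * a := comm_γ_Dd hq (fun m hm => ⟨hm, by omega⟩)
  have hbD : b * D = D * b := comm_γ_Dd hq (fun m hm => ⟨by rw [dual_val]; omega, by rw [dual_val]; omega⟩)
  calc (a * b) * (a * b) = a * ((b * a) * b) := by rw [mul_assoc, mul_assoc]
    _ = a * ((D - a * b) * b) := by rw [hba]
    _ = a * (D * b) - a * (a * (b * b)) := by
        rw [sub_mul, mul_sub, mul_assoc]
    _ = (a * D) * b := by rw [hbb, mul_zero, mul_zero, sub_zero, ← mul_assoc]
    _ = D * (a * b) := by rw [haD, mul_assoc]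

end Aux2

section Aux3
variable {N : ℕ} {q c : ℂ}

lemma inv_step {R : Type*} [Ring R] [Algebra ℂ R] {a d u : R} {q : ℂ} (hq : q ≠ 0)
    (hdu : d * u = 1) (hud : u * d = 1) (hau : a * u = u * a) (had : a * d = d * a)
    (haa : a * a = d * a) :
    ((q ^ 2) • u - (q ^ 2 - q⁻¹ ^ 2) • (a * (u * u))) *
        ((q⁻¹ ^ 2) • d + (q ^ 2 - q⁻¹ ^ 2) • a) = 1 ∧
    ((q⁻¹ ^ 2) • d + (q ^ 2 - q⁻¹ ^ 2) • a) *
        ((q ^ 2) • u - (q ^ 2 - q⁻¹ ^ 2) • (a * (u * u))) = 1 := by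
  have hua : u * a = a * u := hau.symm
  have had' : d * a = a * d := had.symm
  have f3 : d * (a * (u * u)) = a * u := by
    rw [← mul_assoc, had', mul_assoc, ← mul_assoc d u u, hdu, one_mul]
  have f4 : a * (a * (u * u)) = a * u := by
    rw [← mul_assoc, haa, mul_assoc, f3]
  have g4 : a * (u * (a * u)) = a * u := by
    rw [← mul_assoc u a u, hua, mul_assoc a u u, f4]
  have c1' : q⁻¹ ^ 2 * q ^ 2 = 1 := by
    rw [← mul_pow, inv_mul_cancel₀ hq, one_pow]
  have coeff : (q ^ 2 - q⁻¹ ^ 2) * q ^ 2 - (q ^ 2 - q⁻¹ ^ 2) * (q ^ 2 - q⁻¹ ^ 2)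
      = q⁻¹ ^ 2 * (q ^ 2 - q⁻¹ ^ 2) := by ring
  constructor
  · simp only [sub_mul, mul_add, smul_mul_assoc, mul_smul_comm, smul_smul, mul_assoc]
    rw [hud, hua, mul_one, g4]
    rw [smul_sub, smul_sub, smul_smul, smul_smul, smul_smul, smul_smul, c1', one_smul,
      ← sub_smul, coeff]
    abel
  · simp only [add_mul, mul_sub, smul_mul_assoc, mul_smul_comm, smul_smul, mul_assoc]
    rw [hdu, f3, f4]
    rw [smul_add, smul_add, smul_smul, smul_smul, smul_smul, smul_smul,
      show q ^ 2 * q⁻¹ ^ 2 = 1 from by rw [← mul_pow, mul_inv_cancel₀ hq, one_pow], one_smul,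
      ← add_smul, add_sub_assoc, ← sub_smul,
      show q ^ 2 * (q ^ 2 - q⁻¹ ^ 2) - ((q ^ 2 - q⁻¹ ^ 2) * q⁻¹ ^ 2 +
        (q ^ 2 - q⁻¹ ^ 2) * (q ^ 2 - q⁻¹ ^ 2)) = 0 from by ring, zero_smul, add_zero]
end Aux3

section Aux4
variable {N : ℕ} {q c : ℂ}

lemma PS_zero (h0 : 0 < N) : PS N q c ⟨0, h0⟩ = 0 := by
  unfold PS
  have he : Finset.Iio (⟨0, h0⟩ : Fin N) = ∅ := by
    ext x; simp [Fin.lt_def]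
  rw [he, Finset.sum_empty]

lemma qinv_sq (hq : q ≠ 0) : q⁻¹ ^ 2 = q ^ (-2 : ℤ) := by
  rw [zpow_neg, inv_pow, zpow_two]; ring_nf

lemma PS_succ (hq : q ≠ 0) (l : ℕ) (hl : l + 1 < N) :
    PS N q c ⟨l + 1, hl⟩ =
      Ee N q c ⟨l, by omega⟩ + (q⁻¹ ^ 2) • PS N q c ⟨l, by omega⟩ := by
  unfold PS
  have hins : Finset.Iio (⟨l + 1, hl⟩ : Fin N) = insert ⟨l, by omega⟩ (Finset.Iio ⟨l, by omega⟩) := by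
    ext x; simp [Fin.lt_def, Fin.le_def, Fin.ext_iff]
  rw [hins, Finset.sum_insert (by simp [Fin.lt_def])]
  congr 1
  · rw [show 2 * ((l : ℤ)) - 2 * (((l + 1 : ℕ) : ℤ)) + 2 = 0 from by push_cast; ring, zpow_zero,
      one_smul]
    rfl
  · rw [Finset.smul_sum]
    refine Finset.sum_congr rfl fun m hm => ?_
    rw [smul_smul, qinv_sq hq, ← zpow_add₀ hq]
    congr 2
    push_cast; ring

lemma Dd_succ (hq : q ≠ 0) (l : ℕ) (hl : l + 1 < N) :
    Dd N q c ⟨l + 1, hl⟩ =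
      (q⁻¹ ^ 2) • Dd N q c ⟨l, by omega⟩ + (q ^ 2 - q⁻¹ ^ 2) • Ee N q c ⟨l, by omega⟩ := by
  unfold Dd
  rw [PS_succ hq l hl]
  have hβ : c ^ 2 * q ^ ((N : ℤ) - 2 * (((l + 1 : ℕ) : ℤ)) - 1) * (q + q⁻¹)
      = q⁻¹ ^ 2 * (c ^ 2 * q ^ ((N : ℤ) - 2 * ((l : ℕ) : ℤ) - 1) * (q + q⁻¹)) := by
    rw [qinv_sq hq]
    rw [show ((N : ℤ) - 2 * (((l + 1 : ℕ) : ℤ)) - 1) = (-2) + ((N : ℤ) - 2 * ((l : ℕ) : ℤ) - 1)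
      from by push_cast; ring, zpow_add₀ hq]
    ring
  rw [hβ]
  module

lemma D_inv (hq : q ≠ 0) (hc2 : c ^ 2 * (q + q⁻¹) ≠ 0) :
    ∀ l : ℕ, ∀ hl : 2 * l + 1 < N,
      ∃ u : Cl N q c, u * Dd N q c ⟨l, by omega⟩ = 1 ∧ Dd N q c ⟨l, by omega⟩ * u = 1 ∧
        ∀ m : Fin N, l ≤ m.val → 2 * m.val + 1 < N → u * Ee N q c m = Ee N q c m * u := by
  intro l
  induction l with
  | zero =>
    intro hl
    have h0 : 0 < N := by omega
    set β : ℂ := c ^ 2 * q ^ ((N : ℤ) - 2 * (((⟨0, h0⟩ : Fin N)).val : ℤ) - 1) * (q + q⁻¹) with hβdef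
    have hβ : β ≠ 0 := by
      have h1 : c ^ 2 ≠ 0 := fun h => hc2 (by rw [h, zero_mul])
      have h2 : q + q⁻¹ ≠ 0 := fun h => hc2 (by rw [h, mul_zero])
      exact mul_ne_zero (mul_ne_zero h1 (zpow_ne_zero _ hq)) h2
    have hD0 : Dd N q c ⟨0, h0⟩ = β • 1 := by
      rw [Dd, PS_zero h0, smul_zero, zero_add]
    refine ⟨β⁻¹ • 1, ?_, ?_, ?_⟩
    · rw [hD0, smul_mul_assoc, mul_smul_comm, smul_smul, one_mul, inv_mul_cancel₀ hβ, one_smul]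
    · rw [hD0, smul_mul_assoc, mul_smul_comm, smul_smul, one_mul, mul_inv_cancel₀ hβ, one_smul]
    · intro m _ _
      rw [smul_mul_assoc, mul_smul_comm, one_mul, mul_one]
  | succ l ih =>
    intro hl
    have hl' : 2 * l + 1 < N := by omega
    obtain ⟨u', hud, hdu, hcomm⟩ := ih hl'
    set E : Cl N q c := Ee N q c ⟨l, by omega⟩ with hE
    set D' : Cl N q c := Dd N q c ⟨l, by omega⟩ with hD'
    have hau : E * u' = u' * E := (hcomm ⟨l, by omega⟩ (le_refl l) hl').symm
    have had : E * D' = D' * E := comm_E_Dd hq (le_refl _) hl'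
    have haa : E * E = D' * E := E_sq hq ⟨l, by omega⟩ hl'
    obtain ⟨h1, h2⟩ := inv_step (a := E) (d := D') (u := u') hq hdu hud hau had haa
    have hrec : Dd N q c ⟨l + 1, by omega⟩ = (q⁻¹ ^ 2) • D' + (q ^ 2 - q⁻¹ ^ 2) • E :=
      Dd_succ hq l (by omega)
    refine ⟨(q ^ 2) • u' - (q ^ 2 - q⁻¹ ^ 2) • (E * (u' * u')), ?_, ?_, ?_⟩
    · rw [hrec]; exact h1
    · rw [hrec]; exact h2
    · intro m hm h2m
      have hu'm : u' * Ee N q c m = Ee N q c m * u' := hcomm m (by omega) h2m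
      have hEm : Ee N q c m * E = E * Ee N q c m :=
        comm_E_E hq (show (l : ℕ) < m.val from by omega) h2m
      have hkey : (E * (u' * u')) * Ee N q c m = Ee N q c m * (E * (u' * u')) := by
        calc (E * (u' * u')) * Ee N q c m
            = E * (u' * (u' * Ee N q c m)) := by rw [mul_assoc, mul_assoc]
          _ = E * (u' * (Ee N q c m * u')) := by rw [hu'm]
          _ = E * ((u' * Ee N q c m) * u') := by rw [← mul_assoc u' (Ee N q c m) u']
          _ = E * ((Ee N q c m * u') * u') := by rw [hu'm]
          _ = (E * Ee N q c m) * (u' * u') := by rw [mul_assoc (Ee N q c m) u' u', ← mul_assoc]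
          _ = (Ee N q c m * E) * (u' * u') := by rw [← hEm]
          _ = Ee N q c m * (E * (u' * u')) := by rw [mul_assoc]
      rw [sub_mul, mul_sub, smul_mul_assoc, mul_smul_comm, smul_mul_assoc, mul_smul_comm,
        hu'm, hkey]
end Aux4

section Aux5
variable {N : ℕ} {q c : ℂ}

/-- product of generators along a word -/
def W (N : ℕ) (q c : ℂ) (L : List (Fin N)) : Cl N q c := (L.map (γ N q c)).prod

lemma W_nil : W N q c [] = 1 := rfl

lemma W_cons (j : Fin N) (L : List (Fin N)) : W N q c (j :: L) = γ N q c j * W N q c L := by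
  simp [W]

lemma count_cons_ne {α : Type*} [DecidableEq α] {a b : α} (h : ¬ a = b) (L : List α) :
    (b :: L).count a = L.count a := by
  simp [List.count_cons, h, Ne.symm h]

lemma count_cons_eq {α : Type*} [DecidableEq α] (a : α) (L : List α) :
    (a :: L).count a = L.count a + 1 := by
  simp [List.count_cons]

lemma kill (hq : q ≠ 0) {k : Fin N} (h2k : 2 * k.val + 1 < N) :
    ∀ L : List (Fin N),
      (L.count (dual k) + 2 ≤ L.count k → W N q c L = 0) ∧
      (L.count (dual k) + 1 ≤ L.count k → γ N q c k * W N q c L = 0) ∧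
      (L.count k + 2 ≤ L.count (dual k) → W N q c L = 0) ∧
      (L.count k + 1 ≤ L.count (dual k) → γ N q c (dual k) * W N q c L = 0) := by
  have hk2 := k.2
  have hdv : (dual k).val = N - 1 - k.val := dual_val k
  have hkd : ¬ k = dual k := by
    intro h; have := congrArg Fin.val h; rw [hdv] at this; omega
  intro L
  induction L with
  | nil =>
    refine ⟨?_, ?_, ?_, ?_⟩ <;> (intro h; simp [List.count_nil] at h)
  | cons j L ih =>
    obtain ⟨ihA, ihB, ihA', ihB'⟩ := ih
    by_cases hjk : j = k
    · subst hjk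
      rw [count_cons_eq, count_cons_ne (fun h => hkd h.symm), W_cons]
      refine ⟨?_, ?_, ?_, ?_⟩
      · intro h; rw [ihB (by omega)]
      · intro _; rw [← mul_assoc, R_sq j (by omega), zero_mul]
      · intro h; rw [ihA' (by omega), mul_zero]
      · intro h; rw [ihA' (by omega), mul_zero, mul_zero]
    · by_cases hjk' : j = dual k
      · subst hjk'
        rw [count_cons_eq, count_cons_ne hkd, W_cons]
        refine ⟨?_, ?_, ?_, ?_⟩
        · intro h; rw [ihA (by omega), mul_zero]
        · intro h; rw [ihA (by omega), mul_zero, mul_zero]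
        · intro h; rw [ihB' (by omega)]
        · intro _; rw [← mul_assoc, R_sq (dual k) (by rw [hdv]; omega), zero_mul]
      · rw [count_cons_ne (fun h => hjk h.symm), count_cons_ne (fun h => hjk' h.symm), W_cons]
        have hswapk : ∃ u : ℂ, γ N q c k * γ N q c j = u • (γ N q c j * γ N q c k) := by
          refine comm_scalar hq (fun h => hjk h.symm) ?_
          intro h
          exact hjk' (Fin.ext (by rw [hdv]; omega))
        have hswapk' : ∃ u : ℂ,
            γ N q c (dual k) * γ N q c j = u • (γ N q c j * γ N q c (dual k)) := by
          refine comm_scalar hq (fun h => hjk' h.symm) ?_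
          rw [hdv]; intro h
          exact hjk (Fin.ext (by omega))
        refine ⟨?_, ?_, ?_, ?_⟩
        · intro h; rw [ihA h, mul_zero]
        · intro h
          obtain ⟨u, hu⟩ := hswapk
          rw [← mul_assoc, hu, smul_mul_assoc, mul_assoc, ihB h, mul_zero, smul_zero]
        · intro h; rw [ihA' h, mul_zero]
        · intro h
          obtain ⟨u, hu⟩ := hswapk'
          rw [← mul_assoc, hu, smul_mul_assoc, mul_assoc, ihB' h, mul_zero, smul_zero]

lemma hom_word {k : Fin N} (hkd : ¬ k = dual k) (f : Cl N q c →ₐ[ℂ] Cl N q c) (t : ℂ)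
    (hf : ∀ j : Fin N, f (γ N q c j)
      = (if j = k then t else if j = dual k then t⁻¹ else 1) • γ N q c j) :
    ∀ L : List (Fin N),
      f (W N q c L) = (t ^ L.count k * t⁻¹ ^ L.count (dual k)) • W N q c L := by
  intro L
  induction L with
  | nil => simp [W_nil]
  | cons j L ih =>
    rw [W_cons, map_mul, ih, hf j, smul_mul_assoc, mul_smul_comm, smul_smul]
    congr 1
    by_cases hjk : j = k
    · subst hjk
      rw [if_pos rfl, count_cons_eq, count_cons_ne (fun h => hkd h.symm), pow_succ]; ring
    · by_cases hjk' : j = dual k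
      · subst hjk'
        rw [if_neg hjk, if_pos rfl, count_cons_eq, count_cons_ne hkd,
          pow_succ]
        ring
      · rw [if_neg hjk, if_neg hjk', count_cons_ne (fun h => hjk h.symm),
          count_cons_ne (fun h => hjk' h.symm)]
        ring

end Aux5

section Aux6
variable {N : ℕ} {q c : ℂ}

lemma phi_exists (hq : q ≠ 0) {k : Fin N} (h2k : 2 * k.val + 1 < N) (t : ℂ) (ht : t ≠ 0) :
    ∃ φ : Cl N q c →ₐ[ℂ] Cl N q c, ∀ j : Fin N,
      φ (γ N q c j) = (if j = k then t else if j = dual k then t⁻¹ else 1) • γ N q c j := by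
  have hk2 := k.2
  have hkd : ¬ k = dual k := by
    intro h; have := congrArg Fin.val h; rw [dual_val] at this; omega
  set sc : Fin N → ℂ := fun j => if j = k then t else if j = dual k then t⁻¹ else 1 with hsc
  have hsceq : ∀ j : Fin N, sc j = if j = k then t else if j = dual k then t⁻¹ else 1 :=
    fun j => rfl
  have hscd : ∀ i : Fin N, sc i * sc (dual i) = 1 := by
    intro i
    by_cases hik : i = k
    · rw [hsceq, hsceq, if_pos hik, hik, if_neg (fun h => hkd h.symm), if_pos rfl]
      exact mul_inv_cancel₀ ht
    · by_cases hik' : i = dual k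
      · rw [hsceq, hsceq, if_neg hik, if_pos hik', hik', dual_dual, if_pos rfl]
        exact inv_mul_cancel₀ ht
      · have h1 : ¬ dual i = k := fun h => hik' (by rw [← dual_dual i, h])
        have h2 : ¬ dual i = dual k := fun h => hik (dual_inj h)
        rw [hsceq, hsceq, if_neg hik, if_neg hik', if_neg h1, if_neg h2, one_mul]
  set F : FreeAlgebra ℂ (Fin N) →ₐ[ℂ] Cl N q c :=
    FreeAlgebra.lift ℂ (fun j => sc j • γ N q c j) with hF
  have hFgen : ∀ j, F (gen j) = sc j • γ N q c j := fun j => FreeAlgebra.lift_ι_apply _ _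
  have hFpair : ∀ l : Fin N, F (gen l * gen (dual l)) = γ N q c l * γ N q c (dual l) := by
    intro l
    rw [map_mul, hFgen, hFgen, smul_mul_assoc, mul_smul_comm, smul_smul, hscd, one_smul]
  have hrel : ∀ ⦃x y : FreeAlgebra ℂ (Fin N)⦄, Rel N q c x y → F x = F y := by
    intro x y h
    cases h with
    | sq i hi =>
      simp only [map_mul, map_zero, hFgen, smul_mul_assoc, mul_smul_comm, smul_smul]
      rw [R_sq i hi, smul_zero]
    | swap i j hlt hne =>
      simp only [map_mul, map_smul, hFgen, smul_mul_assoc, mul_smul_comm, smul_smul]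
      rw [R_swap hlt hne, smul_smul]
      congr 1
      ring
    | pair i hi =>
      have hL : F (gen (dual i) * gen i) = γ N q c (dual i) * γ N q c i := by
        rw [map_mul, hFgen, hFgen, smul_mul_assoc, mul_smul_comm, smul_smul,
          (mul_comm _ _).trans (hscd i), one_smul]
      rw [hL, map_add, map_add, map_neg, hFpair i, map_smul, map_pairSum F hFpair,
        AlgHom.commutes, Algebra.algebraMap_eq_smul_one]
      exact R_pair i hi
    | middle i hi =>
      have hik : ¬ i = k := fun h => by rw [h] at hi; omega
      have hik' : ¬ i = dual k := by
        intro h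
        have := congrArg Fin.val h
        rw [dual_val] at this; omega
      have hL : F (gen i * gen i) = γ N q c i * γ N q c i := by
        rw [map_mul, hFgen, smul_mul_assoc, mul_smul_comm, smul_smul, hsceq,
          if_neg hik, if_neg hik', one_mul, one_smul]
      rw [hL, map_add, map_smul, map_pairSum F hFpair, AlgHom.commutes,
        Algebra.algebraMap_eq_smul_one]
      exact R_middle i hi
  exact ⟨RingQuot.liftAlgHom ℂ ⟨F, hrel⟩,
    fun j => (RingQuot.liftAlgHom_mkAlgHom_apply ℂ F hrel (gen j)).trans (hFgen j)⟩

lemma two_zpow_injective : Function.Injective (fun d : ℤ => (2 : ℂ) ^ d) := by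
  intro a b hab
  simp only at hab
  have h : (2 : ℝ) ^ a = (2 : ℝ) ^ b := by
    have h2 : ((2 : ℝ) : ℂ) = (2 : ℂ) := by norm_num
    rw [show ((2:ℝ) ^ a : ℝ) = ((2:ℝ) ^ b : ℝ) ↔ (((2:ℝ) ^ a : ℝ) : ℂ) = (((2:ℝ) ^ b : ℝ) : ℂ)
      from (Complex.ofReal_inj).symm, Complex.ofReal_zpow, Complex.ofReal_zpow, h2]
    exact hab
  exact zpow_right_injective₀ (by norm_num) (by norm_num) h

lemma components_zero {M : Type*} [AddCommGroup M] [Module ℂ M] (F : Finset ℤ) :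
    ∀ v : ℤ → M, (∀ t : ℂ, t ≠ 0 → ∑ d ∈ F, (t ^ d) • v d = 0) → ∀ d ∈ F, v d = 0 := by
  induction F using Finset.induction_on with
  | empty => intro v _ d hd; simp at hd
  | @insert a F' ha ih =>
    intro v hv
    have hv' : ∀ t : ℂ, t ≠ 0 →
        ∑ d ∈ F', (t ^ d) • (((2 : ℂ) ^ d - (2 : ℂ) ^ a) • v d) = 0 := by
      intro t ht
      have h1 := hv (2 * t) (mul_ne_zero two_ne_zero ht)
      have h2 := hv t ht
      rw [Finset.sum_insert ha] at h1 h2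
      have e1 : ∑ d ∈ F', ((2 * t) ^ d) • v d = -(((2 * t) ^ a) • v a) :=
        eq_neg_of_add_eq_zero_right h1
      have e2 : ∑ d ∈ F', (t ^ d) • v d = -((t ^ a) • v a) :=
        eq_neg_of_add_eq_zero_right h2
      calc ∑ d ∈ F', (t ^ d) • (((2 : ℂ) ^ d - (2 : ℂ) ^ a) • v d)
          = ∑ d ∈ F', (((2 * t) ^ d) • v d - (2 : ℂ) ^ a • ((t ^ d) • v d)) := by
            refine Finset.sum_congr rfl fun d _ => ?_
            rw [smul_smul, mul_sub, sub_smul, mul_zpow, smul_smul]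
            ring_nf
        _ = ∑ d ∈ F', ((2 * t) ^ d) • v d - (2 : ℂ) ^ a • ∑ d ∈ F', (t ^ d) • v d := by
            rw [Finset.sum_sub_distrib, Finset.smul_sum]
        _ = -(((2 * t) ^ a) • v a) + (2 : ℂ) ^ a • ((t ^ a) • v a) := by
            rw [e1, e2, smul_neg]; abel
        _ = 0 := by
            rw [smul_smul, mul_zpow]; abel
    have hF' : ∀ d ∈ F', v d = 0 := by
      intro d hd
      have hne : (2 : ℂ) ^ d - (2 : ℂ) ^ a ≠ 0 := by
        rw [sub_ne_zero]
        exact fun h => ha (by rw [← two_zpow_injective h]; exact hd)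
      have h0 := ih _ hv' d hd
      rcases smul_eq_zero.mp h0 with h | h
      · exact absurd h hne
      · exact h
    intro d hd
    rcases Finset.mem_insert.mp hd with rfl | hd'
    · have h2 := hv 1 one_ne_zero
      rw [Finset.sum_insert ha] at h2
      have hz : ∑ d ∈ F', ((1 : ℂ) ^ d) • v d = 0 :=
        Finset.sum_eq_zero fun d hd => by rw [hF' d hd, smul_zero]
      rw [hz, add_zero, one_zpow, one_smul] at h2
      exact h2
    · exact hF' d hd'

lemma span_words : (Submodule.span ℂ (Set.range (W N q c)) : Set (Cl N q c)) = Set.univ := by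
  have h1 : Algebra.adjoin ℂ (Set.range (γ N q c)) = ⊤ := by
    have h2 : Set.range (γ N q c)
        = ⇑(RingQuot.mkAlgHom ℂ (Rel N q c)) '' Set.range (FreeAlgebra.ι ℂ) := by
      rw [← Set.range_comp]; rfl
    rw [h2, ← AlgHom.map_adjoin, FreeAlgebra.adjoin_range_ι, Algebra.map_top]
    exact (AlgHom.range_eq_top _).mpr (RingQuot.mkAlgHom_surjective ℂ (Rel N q c))
  have hM : ∀ x ∈ Submonoid.closure (Set.range (γ N q c)), x ∈ Set.range (W N q c) := by
    intro x hx
    induction hx using Submonoid.closure_induction with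
    | mem x hx => obtain ⟨j, hj⟩ := hx; exact ⟨[j], by rw [← hj]; simp [W]⟩
    | one => exact ⟨[], rfl⟩
    | mul x y _ _ hx hy =>
      obtain ⟨L1, h1⟩ := hx
      obtain ⟨L2, h2⟩ := hy
      exact ⟨L1 ++ L2, by rw [← h1, ← h2]; simp [W]⟩
  have hspan := Algebra.adjoin_eq_span ℂ (Set.range (γ N q c))
  rw [h1] at hspan
  ext x
  simp only [Set.mem_univ, iff_true, SetLike.mem_coe]
  have hx : x ∈ Submodule.span ℂ ((Submonoid.closure (Set.range (γ N q c)) : Submonoid (Cl N q c)) : Set (Cl N q c)) := by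
    rw [← hspan]; trivial
  exact Submodule.span_mono hM hx

end Aux6



/-- if `z ≠ 0` satisfies `zγ_k = μγ_k z` and `zγ_{k'} = μ'γ_{k'} z` with
`μ,μ' ≠ 0`, then `z` is homogeneous of `∂_k`-degree `0`. -/
theorem degZero_of_commutation (n ε : ℕ) (hn : 1 ≤ n) (hε : ε ≤ 1)
    (N : ℕ) (hNdef : N = 2 * n + ε) (hN : 3 ≤ N) (q c : ℂ)
    (hq : q ≠ 0) (hqr : ∀ m : ℕ, 0 < m → q ^ m ≠ 1) (hc : c ≠ 0)
    (k : Fin N) (hk : k.val < n) (μ μ' : ℂ) (hμ : μ ≠ 0) (hμ' : μ' ≠ 0)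
    (z : Cl N q c) (hz0 : z ≠ 0)
    (hzk : z * γ N q c k = μ • (γ N q c k * z))
    (hzk' : z * γ N q c (dual k) = μ' • (γ N q c (dual k) * z)) :
    DegZeroAt N q c k.val z := by
  classical
  intro t ht f hf
  have hk2 := k.2
  have h2k : 2 * k.val + 1 < N := by omega
  have hkd : ¬ k = dual k := by
    intro h; have := congrArg Fin.val h; rw [dual_val] at this; omega
  have hc2 : c ^ 2 * (q + q⁻¹) ≠ 0 := by
    refine mul_ne_zero (pow_ne_zero 2 hc) (fun h => hqr 4 (by norm_num) ?_)
    have h1 : q * (q + q⁻¹) = 0 := by rw [h, mul_zero]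
    rw [mul_add, mul_inv_cancel₀ hq] at h1
    calc q ^ 4 = (q * q) ^ 2 := by ring
      _ = ((-1 : ℂ)) ^ 2 := by rw [show q * q = (-1 : ℂ) from by linear_combination h1]
      _ = 1 := by norm_num
  have hf' : ∀ j : Fin N, f (γ N q c j)
      = (if j = k then t else if j = dual k then t⁻¹ else 1) • γ N q c j := by
    intro j
    rw [hf j]
    congr 1
    by_cases h1 : j = k
    · rw [if_pos (show j.val = k.val from by rw [h1]), if_pos h1]
    · rw [if_neg h1, if_neg (fun hh => h1 (Fin.eq_of_val_eq hh))]
      by_cases h2 : j = dual k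
      · rw [if_pos (show j.val + k.val + 1 = N from by rw [h2, dual_val]; omega), if_pos h2]
      · rw [if_neg h2,
          if_neg (fun hh => h2 (Fin.eq_of_val_eq (show j.val = (dual k).val from by
            rw [dual_val]; omega)))]
  have hzmem : z ∈ Submodule.span ℂ (Set.range (W N q c)) :=
    Set.eq_univ_iff_forall.mp span_words z
  obtain ⟨co, hco⟩ := Finsupp.mem_span_range_iff_exists_finsupp.mp hzmem
  rw [Finsupp.sum] at hco
  set S := co.support with hS
  set deg : List (Fin N) → ℤ := fun L => (L.count k : ℤ) - (L.count (dual k) : ℤ) with hdeg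
  set F : Finset ℤ := S.image deg with hFdef
  set zc : ℤ → Cl N q c := fun d => ∑ L ∈ S.filter (fun L => deg L = d), co L • W N q c L
    with hzc
  have hsum : ∀ g : List (Fin N) → Cl N q c,
      ∑ d ∈ F, ∑ L ∈ S.filter (fun L => deg L = d), g L = ∑ L ∈ S, g L :=
    fun g => Finset.sum_fiberwise_of_maps_to (fun L hL => Finset.mem_image_of_mem deg hL) g
  have hzsum : ∑ d ∈ F, zc d = z := by
    simp only [hzc]
    rw [hsum (fun L => co L • W N q c L)]
    exact hco
  have heval : ∀ (g : Cl N q c →ₐ[ℂ] Cl N q c) (t' : ℂ), t' ≠ 0 →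
      (∀ j, g (γ N q c j) = (if j = k then t' else if j = dual k then t'⁻¹ else 1) • γ N q c j) →
      g z = ∑ d ∈ F, (t' ^ d) • zc d := by
    intro g t' ht' hg
    have step1 : g z = ∑ L ∈ S, co L • ((t' ^ (deg L)) • W N q c L) := by
      rw [← hco, map_sum]
      refine Finset.sum_congr rfl fun L _ => ?_
      rw [map_smul, hom_word hkd g t' hg L]
      congr 2
      simp only [hdeg]
      rw [zpow_sub₀ ht', zpow_natCast, zpow_natCast, div_eq_mul_inv, inv_pow]
    rw [step1, ← hsum (fun L => co L • ((t' ^ (deg L)) • W N q c L))]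
    refine Finset.sum_congr rfl fun d _ => ?_
    simp only [hzc]
    rw [Finset.smul_sum]
    refine Finset.sum_congr rfl fun L hL => ?_
    rw [(Finset.mem_filter.mp hL).2, smul_comm]
  have hcommk : ∀ d ∈ F, zc d * γ N q c k = μ • (γ N q c k * zc d) := by
    have h0 : ∀ d ∈ F, zc d * γ N q c k - μ • (γ N q c k * zc d) = 0 := by
      refine components_zero F _ (fun t' ht' => ?_)
      obtain ⟨φ, hφ⟩ := phi_exists hq h2k t' ht'
      have hsck : (if k = k then t' else if k = dual k then t'⁻¹ else 1) = t' := if_pos rfl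
      have h1 := congrArg φ hzk
      rw [map_mul, map_smul, map_mul, hφ k, hsck, heval φ t' ht' hφ,
        mul_smul_comm, smul_mul_assoc, smul_comm μ t'] at h1
      have h2 := smul_right_injective (Cl N q c) ht' h1
      have h2' : ∑ d ∈ F, (t' ^ d) • (zc d * γ N q c k)
          = ∑ d ∈ F, (t' ^ d) • (μ • (γ N q c k * zc d)) := by
        calc ∑ d ∈ F, (t' ^ d) • (zc d * γ N q c k)
            = (∑ d ∈ F, (t' ^ d) • zc d) * γ N q c k := by
              rw [Finset.sum_mul]
              exact Finset.sum_congr rfl fun d _ => (smul_mul_assoc _ _ _).symm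
          _ = μ • (γ N q c k * ∑ d ∈ F, (t' ^ d) • zc d) := h2
          _ = ∑ d ∈ F, (t' ^ d) • (μ • (γ N q c k * zc d)) := by
              rw [Finset.mul_sum, Finset.smul_sum]
              refine Finset.sum_congr rfl fun d _ => ?_
              rw [mul_smul_comm, smul_comm]
      calc ∑ d ∈ F, (t' ^ d) • (zc d * γ N q c k - μ • (γ N q c k * zc d))
          = ∑ d ∈ F, ((t' ^ d) • (zc d * γ N q c k) - (t' ^ d) • (μ • (γ N q c k * zc d))) := by
            exact Finset.sum_congr rfl fun d _ => smul_sub _ _ _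
        _ = 0 := by rw [Finset.sum_sub_distrib, h2', sub_self]
    exact fun d hd => sub_eq_zero.mp (h0 d hd)
  have hcommk' : ∀ d ∈ F, zc d * γ N q c (dual k) = μ' • (γ N q c (dual k) * zc d) := by
    have h0 : ∀ d ∈ F, zc d * γ N q c (dual k) - μ' • (γ N q c (dual k) * zc d) = 0 := by
      refine components_zero F _ (fun t' ht' => ?_)
      obtain ⟨φ, hφ⟩ := phi_exists hq h2k t' ht'
      have hsck : (if dual k = k then t' else if dual k = dual k then t'⁻¹ else 1) = t'⁻¹ := by
        rw [if_neg (fun h => hkd h.symm), if_pos rfl]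
      have h1 := congrArg φ hzk'
      rw [map_mul, map_smul, map_mul, hφ (dual k), hsck, heval φ t' ht' hφ,
        mul_smul_comm, smul_mul_assoc, smul_comm μ' t'⁻¹] at h1
      have h2 := smul_right_injective (Cl N q c) (inv_ne_zero ht') h1
      have h2' : ∑ d ∈ F, (t' ^ d) • (zc d * γ N q c (dual k))
          = ∑ d ∈ F, (t' ^ d) • (μ' • (γ N q c (dual k) * zc d)) := by
        calc ∑ d ∈ F, (t' ^ d) • (zc d * γ N q c (dual k))
            = (∑ d ∈ F, (t' ^ d) • zc d) * γ N q c (dual k) := by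
              rw [Finset.sum_mul]
              exact Finset.sum_congr rfl fun d _ => (smul_mul_assoc _ _ _).symm
          _ = μ' • (γ N q c (dual k) * ∑ d ∈ F, (t' ^ d) • zc d) := h2
          _ = ∑ d ∈ F, (t' ^ d) • (μ' • (γ N q c (dual k) * zc d)) := by
              rw [Finset.mul_sum, Finset.smul_sum]
              refine Finset.sum_congr rfl fun d _ => ?_
              rw [mul_smul_comm, smul_comm]
      calc ∑ d ∈ F, (t' ^ d) • (zc d * γ N q c (dual k) - μ' • (γ N q c (dual k) * zc d))
          = ∑ d ∈ F, ((t' ^ d) • (zc d * γ N q c (dual k))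
              - (t' ^ d) • (μ' • (γ N q c (dual k) * zc d))) := by
            exact Finset.sum_congr rfl fun d _ => smul_sub _ _ _
        _ = 0 := by rw [Finset.sum_sub_distrib, h2', sub_self]
    exact fun d hd => sub_eq_zero.mp (h0 d hd)
  have hEk : Ee N q c k = γ N q c k * γ N q c (dual k) := rfl
  have hkillcomp : ∀ d ∈ F, d ≠ 0 → zc d = 0 := by
    intro d hd hd0
    have hpair := R_pair' (q := q) (c := c) k h2k
    have hsplit : Dd N q c k * zc d
        = γ N q c (dual k) * (γ N q c k * zc d) + γ N q c k * (γ N q c (dual k) * zc d) := by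
      have hDd : Dd N q c k = γ N q c (dual k) * γ N q c k + Ee N q c k := by
        rw [hpair, sub_add_cancel]
      rw [hDd, add_mul, hEk, mul_assoc, mul_assoc]
    have hDk : Dd N q c k * zc d = 0 := by
      rcases lt_or_gt_of_ne hd0 with hneg | hpos
      · have hkl : γ N q c (dual k) * zc d = 0 := by
          simp only [hzc]
          rw [Finset.mul_sum]
          refine Finset.sum_eq_zero fun L hL => ?_
          have hdL : deg L = d := (Finset.mem_filter.mp hL).2
          have hcount : L.count k + 1 ≤ L.count (dual k) := by
            simp only [hdeg] at hdL; omega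
          rw [mul_smul_comm, (kill hq h2k L).2.2.2 hcount, smul_zero]
        have hgk : γ N q c k * zc d = μ⁻¹ • (zc d * γ N q c k) := by
          rw [hcommk d hd, smul_smul, inv_mul_cancel₀ hμ, one_smul]
        have hterm1 : γ N q c (dual k) * (γ N q c k * zc d) = 0 := by
          rw [hgk, mul_smul_comm, ← mul_assoc, hkl, zero_mul, smul_zero]
        have hterm2 : γ N q c k * (γ N q c (dual k) * zc d) = 0 := by
          rw [hkl, mul_zero]
        rw [hsplit, hterm1, hterm2, add_zero]
      · have hkl : γ N q c k * zc d = 0 := by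
          simp only [hzc]
          rw [Finset.mul_sum]
          refine Finset.sum_eq_zero fun L hL => ?_
          have hdL : deg L = d := (Finset.mem_filter.mp hL).2
          have hcount : L.count (dual k) + 1 ≤ L.count k := by
            simp only [hdeg] at hdL; omega
          rw [mul_smul_comm, (kill hq h2k L).2.1 hcount, smul_zero]
        have hgk : γ N q c (dual k) * zc d = μ'⁻¹ • (zc d * γ N q c (dual k)) := by
          rw [hcommk' d hd, smul_smul, inv_mul_cancel₀ hμ', one_smul]
        have hterm2 : γ N q c k * (γ N q c (dual k) * zc d) = 0 := by
          rw [hgk, mul_smul_comm, ← mul_assoc, hkl, zero_mul, smul_zero]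
        have hterm1 : γ N q c (dual k) * (γ N q c k * zc d) = 0 := by
          rw [hkl, mul_zero]
        rw [hsplit, hterm1, hterm2, add_zero]
    obtain ⟨u, hu, -, -⟩ := D_inv (q := q) (c := c) hq hc2 k.val h2k
    have hkk : (⟨k.val, by omega⟩ : Fin N) = k := rfl
    calc zc d = 1 * zc d := (one_mul _).symm
      _ = u * (Dd N q c k * zc d) := by rw [← hu, hkk, mul_assoc]
      _ = 0 := by rw [hDk, mul_zero]
  rw [heval f t ht hf', ← hzsum]
  refine Finset.sum_congr rfl fun d hd => ?_
  by_cases hd0 : d = 0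
  · rw [hd0, zpow_zero, one_smul]
  · rw [hkillcomp d hd hd0, smul_zero]

end FRT
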